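/- Posterior decomposition bound: Let π₀ be a prior probability density on a measurable parameter space Ω, and for datasets X = D ∪ {x} and Z = D ∪ {z} of size n (differing in one point), let d(x;θ) = k(x;θ)/k(x;θ*) be the likelihood ratio against a fixed θ*, m_n(A, X) = ∫_A ∏_{i=1}^n d(x_i;θ) π₀(θ) dθ, and P_{π_n}(S|X) = m_n(S,X)/m_n(Ω,X) the posterior probability. Fix a measurable A_n ⊆ Ω and set η_n = sup_{x,z} sup_{θ ∈ A_n} d(x;θ)/d(z;θ). Then for every measurable S ⊆ Ω: P_{π_n}(S|X) ≤ η_n (η_n + m_n(A_nᶜ, Z)/m_n(Ω, X)) · P_{π_n}(S|Z) + m_n(A_nᶜ, X)/m_n(Ω, X), assuming all the relevant integrals are positive and finite and η_n is finite. -/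

import Mathlib

open MeasureTheory

/-- `m_n(A, pts) = ∫_A ∏ᵢ d(ptsᵢ; θ) π₀(dθ)` -/
noncomputable def posteriorMass {Θ 𝒳 : Type*} [MeasurableSpace Θ] (π₀ : Measure Θ)
    {n : ℕ} (d : 𝒳 → Θ → ℝ) (A : Set Θ) (pts : Fin n → 𝒳) : ℝ :=
  ∫ θ in A, (∏ i, d (pts i) θ) ∂π₀

/-- Posterior decomposition bound (Proposition 1):
`P_{π_n}(S|X) ≤ η (η + m_n(A_nᶜ, Z)/m_n(Ω, X)) P_{π_n}(S|Z) + m_n(A_nᶜ, X)/m_n(Ω, X)`,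
for neighbouring datasets `X = D ∪ {x}`, `Z = D ∪ {z}` and
`η = sup_{x,z ∈ 𝒳} sup_{θ ∈ A n} d(x;θ)/d(z;θ)`. -/
theorem posterior_decomposition_bound
    {Θ 𝒳 : Type*} [MeasurableSpace Θ] (π₀ : Measure Θ) [IsProbabilityMeasure π₀]
    (n : ℕ) (D : Fin n → 𝒳) (x z : 𝒳)
    (d : 𝒳 → Θ → ℝ) (hd_pos : ∀ y θ, 0 < d y θ)
    (An S : Set Θ) (hAn : MeasurableSet An) (hS : MeasurableSet S)
    -- the two neighbouring datasets of size n+1 sharing the n common points of D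
    (X Z : Fin (n + 1) → 𝒳) (hX : X = Fin.cons x D) (hZ : Z = Fin.cons z D)
    -- the relevant integrals are finite …
    (hintX : Integrable (fun θ => ∏ i, d (X i) θ) π₀)
    (hintZ : Integrable (fun θ => ∏ i, d (Z i) θ) π₀)
    -- … and positive
    (hposX : 0 < posteriorMass π₀ d Set.univ X)
    (hposZ : 0 < posteriorMass π₀ d Set.univ Z)
    -- η is finite, i.e. the supremum defining it is over a bounded nonempty set
    (η : ℝ)
    (hη : η = sSup {r : ℝ | ∃ x' z' θ, θ ∈ An ∧ r = d x' θ / d z' θ})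
    (hηbdd : BddAbove {r : ℝ | ∃ x' z' θ, θ ∈ An ∧ r = d x' θ / d z' θ})
    (hηne : {r : ℝ | ∃ x' z' θ, θ ∈ An ∧ r = d x' θ / d z' θ}.Nonempty) :
    posteriorMass π₀ d S X / posteriorMass π₀ d Set.univ X ≤
      η * (η + posteriorMass π₀ d Anᶜ Z / posteriorMass π₀ d Set.univ X) *
        (posteriorMass π₀ d S Z / posteriorMass π₀ d Set.univ Z) +
      posteriorMass π₀ d Anᶜ X / posteriorMass π₀ d Set.univ X := by
  -- notation
  set fX : Θ → ℝ := fun θ => ∏ i, d (X i) θ with hfX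
  set fZ : Θ → ℝ := fun θ => ∏ i, d (Z i) θ with hfZ
  have hfX_pos : ∀ θ, 0 < fX θ := fun θ => Finset.prod_pos fun i _ => hd_pos _ _
  have hfZ_pos : ∀ θ, 0 < fZ θ := fun θ => Finset.prod_pos fun i _ => hd_pos _ _
  -- η bounds
  have hmem : ∀ x' z' θ, θ ∈ An → d x' θ / d z' θ ≤ η := by
    intro x' z' θ hθ
    rw [hη]
    exact le_csSup hηbdd ⟨x', z', θ, hθ, rfl⟩
  have hη1 : (1 : ℝ) ≤ η := by
    obtain ⟨r, x', z', θ, hθ, -⟩ := hηne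
    have : d x' θ / d x' θ ≤ η := hmem x' x' θ hθ
    rwa [div_self (hd_pos x' θ).ne'] at this
  have hη0 : (0 : ℝ) ≤ η := le_trans zero_le_one hη1
  -- pointwise bounds on An
  have hprodX : ∀ θ, fX θ = d x θ * ∏ i, d (D i) θ := by
    intro θ; simp [hfX, hX, Fin.prod_univ_succ]
  have hprodZ : ∀ θ, fZ θ = d z θ * ∏ i, d (D i) θ := by
    intro θ; simp [hfZ, hZ, Fin.prod_univ_succ]
  have hp_pos : ∀ θ, 0 < ∏ i, d (D i) θ := fun θ => Finset.prod_pos fun i _ => hd_pos _ _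
  have hXZ : ∀ θ ∈ An, fX θ ≤ η * fZ θ := by
    intro θ hθ
    have h := (div_le_iff₀ (hd_pos z θ)).mp (hmem x z θ hθ)
    rw [hprodX, hprodZ]
    calc d x θ * ∏ i, d (D i) θ ≤ (η * d z θ) * ∏ i, d (D i) θ :=
          mul_le_mul_of_nonneg_right h (hp_pos θ).le
      _ = η * (d z θ * ∏ i, d (D i) θ) := by ring
  have hZX : ∀ θ ∈ An, fZ θ ≤ η * fX θ := by
    intro θ hθ
    have h := (div_le_iff₀ (hd_pos x θ)).mp (hmem z x θ hθ)
    rw [hprodX, hprodZ]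
    calc d z θ * ∏ i, d (D i) θ ≤ (η * d x θ) * ∏ i, d (D i) θ :=
          mul_le_mul_of_nonneg_right h (hp_pos θ).le
      _ = η * (d x θ * ∏ i, d (D i) θ) := by ring
  -- abbreviations
  have hb : 0 < posteriorMass π₀ d Set.univ X := hposX
  have he : 0 < posteriorMass π₀ d Set.univ Z := hposZ
  have hc : 0 ≤ posteriorMass π₀ d S Z :=
    setIntegral_nonneg hS (fun θ _ => (hfZ_pos θ).le)
  -- key inequality (1): m S X ≤ η * m S Z + m Anᶜ X
  have key1 : posteriorMass π₀ d S X ≤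
      η * posteriorMass π₀ d S Z + posteriorMass π₀ d Anᶜ X := by
    have hsplit : (∫ θ in S ∩ An, fX θ ∂π₀) + (∫ θ in S \ An, fX θ ∂π₀)
        = ∫ θ in S, fX θ ∂π₀ := integral_inter_add_diff hAn hintX.integrableOn
    have h1 : (∫ θ in S ∩ An, fX θ ∂π₀) ≤ η * posteriorMass π₀ d S Z := by
      calc (∫ θ in S ∩ An, fX θ ∂π₀) ≤ ∫ θ in S ∩ An, η * fZ θ ∂π₀ := by
            refine setIntegral_mono_on hintX.integrableOn
              (hintZ.integrableOn.const_mul η) (hS.inter hAn) ?_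
            exact fun θ hθ => hXZ θ hθ.2
        _ = η * ∫ θ in S ∩ An, fZ θ ∂π₀ := integral_const_mul η fZ
        _ ≤ η * ∫ θ in S, fZ θ ∂π₀ := by
            refine mul_le_mul_of_nonneg_left ?_ hη0
            refine setIntegral_mono_set hintZ.integrableOn
              (Filter.Eventually.of_forall fun θ => (hfZ_pos θ).le)
              (HasSubset.Subset.eventuallyLE Set.inter_subset_left)
    have h2 : (∫ θ in S \ An, fX θ ∂π₀) ≤ posteriorMass π₀ d Anᶜ X := by
      refine setIntegral_mono_set hintX.integrableOn
        (Filter.Eventually.of_forall fun θ => (hfX_pos θ).le)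
        (HasSubset.Subset.eventuallyLE ?_)
      intro θ hθ; exact hθ.2
    calc posteriorMass π₀ d S X
        = (∫ θ in S ∩ An, fX θ ∂π₀) + (∫ θ in S \ An, fX θ ∂π₀) := hsplit.symm
      _ ≤ η * posteriorMass π₀ d S Z + posteriorMass π₀ d Anᶜ X := add_le_add h1 h2
  -- key inequality (2): m Ω Z ≤ η * m Ω X + m Anᶜ Z
  have key2 : posteriorMass π₀ d Set.univ Z ≤
      η * posteriorMass π₀ d Set.univ X + posteriorMass π₀ d Anᶜ Z := by
    have hsplit : (∫ θ in An, fZ θ ∂π₀) + (∫ θ in Anᶜ, fZ θ ∂π₀)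
        = ∫ θ, fZ θ ∂π₀ := integral_add_compl hAn hintZ
    have h1 : (∫ θ in An, fZ θ ∂π₀) ≤ η * posteriorMass π₀ d Set.univ X := by
      calc (∫ θ in An, fZ θ ∂π₀) ≤ ∫ θ in An, η * fX θ ∂π₀ := by
            refine setIntegral_mono_on hintZ.integrableOn
              (hintX.integrableOn.const_mul η) hAn ?_
            exact fun θ hθ => hZX θ hθ
        _ = η * ∫ θ in An, fX θ ∂π₀ := integral_const_mul η fX
        _ ≤ η * posteriorMass π₀ d Set.univ X := by
            refine mul_le_mul_of_nonneg_left ?_ hη0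
            have huX : posteriorMass π₀ d Set.univ X = ∫ θ, fX θ ∂π₀ := by
              simp [posteriorMass, hfX]
            rw [huX]
            exact setIntegral_le_integral hintX
              (Filter.Eventually.of_forall fun θ => (hfX_pos θ).le)
    have : posteriorMass π₀ d Set.univ Z = ∫ θ, fZ θ ∂π₀ := by
      simp [posteriorMass, hfZ]
    rw [this, ← hsplit]
    exact add_le_add h1 le_rfl
  -- final algebra
  set a := posteriorMass π₀ d S X
  set b := posteriorMass π₀ d Set.univ X
  set c := posteriorMass π₀ d S Z
  set e := posteriorMass π₀ d Set.univ Z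
  set cX := posteriorMass π₀ d Anᶜ X
  set cZ := posteriorMass π₀ d Anᶜ Z
  have hstep1 : a / b ≤ (η * c + cX) / b := div_le_div_of_nonneg_right key1 hb.le
  have hsum : (η * c + cX) / b = η * (c / b) + cX / b := by ring
  have hcb : c / b ≤ (c / e) * (η + cZ / b) := by
    have h1 : c / b = (c / e) * (e / b) := by
      field_simp
    have h2 : e / b ≤ (η * b + cZ) / b := div_le_div_of_nonneg_right key2 hb.le
    have h3 : (η * b + cZ) / b = η + cZ / b := by
      field_simp
    calc c / b = (c / e) * (e / b) := h1
      _ ≤ (c / e) * ((η * b + cZ) / b) :=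
          mul_le_mul_of_nonneg_left h2 (div_nonneg hc he.le)
      _ = (c / e) * (η + cZ / b) := by rw [h3]
  calc a / b ≤ η * (c / b) + cX / b := hstep1.trans (le_of_eq hsum)
    _ ≤ η * ((c / e) * (η + cZ / b)) + cX / b := by
        have := mul_le_mul_of_nonneg_left hcb hη0
        linarith
    _ = η * (η + cZ / b) * (c / e) + cX / b := by ring
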